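/- arXiv:1706.01390 — 2 statements merged into one kernel-verified Lean document; each statement's English description precedes it below -/
import Mathlib

section
/- Let V and W be finite-dimensional real inner product spaces and B : V × V → W a bilinear alternating map. Let N be the group with underlying set V × W and product (v,w)·(v',w') = (v+v', w+w' + ½B(v,v')), so that (v,w)^{-1} = (-v,-w), and let Lebesgue measure dv dw be its Haar measure. Define convolution by (F * G)(x) = ∫_N F(y) G(y^{-1}·x) dy. Let s be a linear subspace of W, W' = s^⊥ its orthogonal complement in W, π : W → W' the orthogonal projection, and let N' be the group with underlying set V × W' and product (v,w')·(v',w'') = (v+v', w'+w'' + ½π(B(v,v'))), with convolution *' defined analogously using Lebesgue measure on V × W'. For F ∈ S(V × W) define (R^s F)(v,w') = ∫_s F(v, w' + σ) dσ, using Lebesgue measure on s. Then for all F, G ∈ S(V × W): R^s(F * G) = (R^s F) *' (R^s G). -/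
open MeasureTheory Module RealInnerProductSpace
set_option maxHeartbeats 1000000

/-- Group convolution on the two-step nilpotent group `V × W` with product
`(v,w)·(v',w') = (v+v', w+w'+½B(v,v'))`:
`(F * G)(x) = ∫ F(y) G(y⁻¹·x) dy`. -/
noncomputable def nilConv {V W : Type*}
    [NormedAddCommGroup V] [NormedSpace ℝ V] [MeasureSpace V]
    [NormedAddCommGroup W] [NormedSpace ℝ W] [MeasureSpace W]
    (B : V →ₗ[ℝ] V →ₗ[ℝ] W) (F G : V × W → ℂ) : V × W → ℂ :=
  fun x => ∫ y : V × W, F y * G (x.1 - y.1, x.2 - y.2 - (2⁻¹ : ℝ) • B y.1 x.1)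

/-- The transform `R^s F (v,w') = ∫_s F(v, w'+σ) dσ`. -/
noncomputable def radonS {V W : Type*}
    [NormedAddCommGroup V] [NormedSpace ℝ V]
    [NormedAddCommGroup W] [InnerProductSpace ℝ W]
    (s : Submodule ℝ W) [MeasureSpace s]
    (F : V × W → ℂ) : V × ↥sᗮ → ℂ :=
  fun p => ∫ σ : s, F (p.1, (p.2 : W) + (σ : W))

theorem exists_orthAddEquiv {W : Type*} [NormedAddCommGroup W] [InnerProductSpace ℝ W]
    [FiniteDimensional ℝ W] [MeasurableSpace W] [BorelSpace W]
    (s : Submodule ℝ W) [MeasurableSpace s] [BorelSpace s]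
    [MeasurableSpace ↥sᗮ] [BorelSpace ↥sᗮ] :
    ∃ e : (s × ↥sᗮ) ≃ᵐ W, MeasurePreserving e volume volume ∧
      ∀ p : s × ↥sᗮ, e p = (p.1 : W) + (p.2 : W) := by
  classical
  set ι := Fin (finrank ℝ s) with hι
  set κ := Fin (finrank ℝ ↥sᗮ) with hκ
  let b : OrthonormalBasis ι ℝ s := stdOrthonormalBasis ℝ s
  let c : OrthonormalBasis κ ℝ ↥sᗮ := stdOrthonormalBasis ℝ ↥sᗮ
  let f : ι ⊕ κ → W := Sum.elim (fun i => (b i : W)) (fun j => (c j : W))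
  have horth : Orthonormal ℝ f := by
    rw [orthonormal_iff_ite]
    rintro (i | i) (j | j)
    · simpa [f, Submodule.coe_inner] using (orthonormal_iff_ite.1 b.orthonormal) i j
    · simp only [f, Sum.elim_inl, Sum.elim_inr]
      rw [if_neg (by simp)]
      exact Submodule.inner_right_of_mem_orthogonal (b i).2 (c j).2
    · simp only [f, Sum.elim_inl, Sum.elim_inr]
      rw [if_neg (by simp)]
      exact Submodule.inner_left_of_mem_orthogonal (b j).2 (c i).2
    · simpa [f, Submodule.coe_inner] using (orthonormal_iff_ite.1 c.orthonormal) i j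
  have hsp1 : Submodule.span ℝ (Set.range fun i : ι => (b i : W)) = s := by
    have : (fun i : ι => (b i : W)) = s.subtype ∘ ⇑b := rfl
    rw [this, Set.range_comp, ← Submodule.map_span, ← b.coe_toBasis, b.toBasis.span_eq,
      Submodule.map_subtype_top]
  have hsp2 : Submodule.span ℝ (Set.range fun j : κ => (c j : W)) = sᗮ := by
    have : (fun j : κ => (c j : W)) = (sᗮ).subtype ∘ ⇑c := rfl
    rw [this, Set.range_comp, ← Submodule.map_span, ← c.coe_toBasis, c.toBasis.span_eq,
      Submodule.map_subtype_top]
  have hspan : ⊤ ≤ Submodule.span ℝ (Set.range f) := by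
    rw [show Set.range f = (Set.range fun i : ι => (b i : W)) ∪
        (Set.range fun j : κ => (c j : W)) from Set.Sum.elim_range _ _,
      Submodule.span_union, hsp1, hsp2, Submodule.sup_orthogonal_of_hasOrthogonalProjection]
  let d : OrthonormalBasis (ι ⊕ κ) ℝ W := OrthonormalBasis.mk horth hspan
  have hd : ∀ k, d k = f k := fun k => by simp [d, OrthonormalBasis.coe_mk]
  let E1 : (s × ↥sᗮ) ≃ᵐ (EuclideanSpace ℝ ι × EuclideanSpace ℝ κ) :=
    MeasurableEquiv.prodCongr b.measurableEquiv c.measurableEquiv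
  let E2 : (EuclideanSpace ℝ ι × EuclideanSpace ℝ κ) ≃ᵐ ((ι → ℝ) × (κ → ℝ)) :=
    MeasurableEquiv.prodCongr (MeasurableEquiv.toLp 2 (ι → ℝ)).symm (MeasurableEquiv.toLp 2 (κ → ℝ)).symm
  let E3 : ((ι → ℝ) × (κ → ℝ)) ≃ᵐ (ι ⊕ κ → ℝ) :=
    (MeasurableEquiv.sumPiEquivProdPi fun _ => ℝ).symm
  let E4 : (ι ⊕ κ → ℝ) ≃ᵐ EuclideanSpace ℝ (ι ⊕ κ) :=
    (MeasurableEquiv.toLp 2 (ι ⊕ κ → ℝ))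
  let E5 : EuclideanSpace ℝ (ι ⊕ κ) ≃ᵐ W := d.measurableEquiv.symm
  refine ⟨(((E1.trans E2).trans E3).trans E4).trans E5, ?_, ?_⟩
  · have h1 : MeasurePreserving E1 volume volume :=
      (b.measurePreserving_measurableEquiv).prod (c.measurePreserving_measurableEquiv)
    have h2 : MeasurePreserving E2 volume volume :=
      (EuclideanSpace.volume_preserving_symm_measurableEquiv_toLp ι).prod
        (EuclideanSpace.volume_preserving_symm_measurableEquiv_toLp κ)
    have h3 : MeasurePreserving E3 volume volume :=
      volume_measurePreserving_sumPiEquivProdPi_symm fun _ => ℝ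
    have h4 : MeasurePreserving E4 volume volume :=
      (EuclideanSpace.volume_preserving_symm_measurableEquiv_toLp (ι ⊕ κ)).symm
    have h5 : MeasurePreserving E5 volume volume :=
      d.measurePreserving_measurableEquiv.symm
    exact h5.comp (h4.comp (h3.comp (h2.comp h1)))
  · intro p
    have hq : ∀ k, (E4 (E3 (E2 (E1 p)))) k = Sum.elim (⇑(b.repr p.1)) (⇑(c.repr p.2)) k := by
      rintro (i | j) <;> rfl
    have hcoe : ∀ x : s, ∑ i, b.repr x i • ((b i : W)) = (x : W) := by
      intro x
      have := congrArg s.subtype (b.sum_repr x)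
      simpa [map_sum] using this
    have hcoe' : ∀ x : ↥sᗮ, ∑ j, c.repr x j • ((c j : W)) = (x : W) := by
      intro x
      have := congrArg (sᗮ).subtype (c.sum_repr x)
      simpa [map_sum] using this
    calc (((E1.trans E2).trans E3).trans E4).trans E5 p
        = d.repr.symm (E4 (E3 (E2 (E1 p)))) := rfl
      _ = ∑ k, (E4 (E3 (E2 (E1 p)))) k • d k := (d.sum_repr_symm _).symm
      _ = (p.1 : W) + (p.2 : W) := by
          simp only [hq, hd]
          rw [Fintype.sum_sum_type]
          simp only [Sum.elim_inl, Sum.elim_inr, f]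
          rw [hcoe p.1, hcoe' p.2]

theorem schwartz_slice_bound {V W : Type*}
    [NormedAddCommGroup V] [NormedSpace ℝ V]
    [NormedAddCommGroup W] [InnerProductSpace ℝ W] [FiniteDimensional ℝ W]
    (s : Submodule ℝ W) [MeasurableSpace s] [BorelSpace s]
    (G : SchwartzMap (V × W) ℂ) :
    ∃ C : ℝ, 0 ≤ C ∧
      (∀ (a : V) (b : W), Integrable (fun σ : s => G (a, b + (σ : W))) volume) ∧
      (∀ (a : V) (b : W), (∫ σ : s, ‖G (a, b + (σ : W))‖) ≤ C) := by
  classical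
  set k : ℕ := finrank ℝ s + 1 with hk
  -- decay bound for G
  obtain ⟨D, hD0, hD⟩ : ∃ D : ℝ, 0 ≤ D ∧ ∀ x : V × W, (1 + ‖x‖) ^ k * ‖G x‖ ≤ D := by
    refine ⟨2 ^ k * ((Finset.Iic (k, 0)).sup fun m => SchwartzMap.seminorm ℝ m.1 m.2) G,
      mul_nonneg (by positivity) (apply_nonneg _ _), fun x => ?_⟩
    have := SchwartzMap.one_add_le_sup_seminorm_apply (𝕜 := ℝ) (m := (k, 0)) (k := k) (n := 0)
      le_rfl le_rfl G x
    simpa [norm_iteratedFDeriv_zero] using this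
  have hGx : ∀ x : V × W, ‖G x‖ ≤ D * ((1 + ‖x‖) ^ k)⁻¹ := by
    intro x
    rw [← div_eq_mul_inv, le_div_iff₀ (by positivity)]
    calc ‖G x‖ * (1 + ‖x‖) ^ k = (1 + ‖x‖) ^ k * ‖G x‖ := mul_comm _ _
      _ ≤ D := hD x
  -- the dominating integrable function on s
  have hint : Integrable (fun σ : s => D * ((1 + ‖σ‖) ^ k)⁻¹) volume := by
    have h1 : Integrable (fun σ : s => (1 + ‖σ‖) ^ (-(k : ℝ))) volume := by
      apply integrable_one_add_norm
      rw [hk]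
      push_cast
      linarith
    refine (h1.const_mul D).congr (Filter.Eventually.of_forall fun σ => ?_)
    show D * (1 + ‖σ‖) ^ (-(k : ℝ)) = D * ((1 + ‖σ‖) ^ k)⁻¹
    rw [← Real.rpow_natCast (1 + ‖σ‖) k, ← Real.rpow_neg (by positivity)]
  -- pointwise bound
  have hbnd : ∀ (a : V) (b : W) (σ : s),
      ‖G (a, b + (σ : W))‖ ≤ D * ((1 + ‖σ + Submodule.orthogonalProjectionOnto s b‖) ^ k)⁻¹ := by
    intro a b σ
    have hmem1 : ((σ + Submodule.orthogonalProjectionOnto s b : s) : W) ∈ s := (σ + Submodule.orthogonalProjectionOnto s b).2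
    have hmem2 : ((Submodule.orthogonalProjectionOnto sᗮ b : ↥sᗮ) : W) ∈ sᗮ := (Submodule.orthogonalProjectionOnto sᗮ b).2
    have hinner : inner ℝ ((σ + Submodule.orthogonalProjectionOnto s b : s) : W)
        ((Submodule.orthogonalProjectionOnto sᗮ b : ↥sᗮ) : W) = (0 : ℝ) :=
      Submodule.inner_right_of_mem_orthogonal hmem1 hmem2
    have hdecomp : b + (σ : W) = ((σ + Submodule.orthogonalProjectionOnto s b : s) : W)
        + ((Submodule.orthogonalProjectionOnto sᗮ b : ↥sᗮ) : W) := by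
      have hb : ((Submodule.orthogonalProjectionOnto s b : s) : W) + ((Submodule.orthogonalProjectionOnto sᗮ b : ↥sᗮ) : W) = b := Submodule.starProjection_add_starProjection_orthogonal (K := s) b
      push_cast
      conv_lhs => rw [← hb]
      abel
    have hnle : ‖σ + Submodule.orthogonalProjectionOnto s b‖ ≤ ‖b + (σ : W)‖ := by
      have hsq := norm_add_sq_real ((σ + Submodule.orthogonalProjectionOnto s b : s) : W)
        ((Submodule.orthogonalProjectionOnto sᗮ b : ↥sᗮ) : W)
      rw [hinner] at hsq
      have hns : ‖σ + Submodule.orthogonalProjectionOnto s b‖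
          = ‖((σ + Submodule.orthogonalProjectionOnto s b : s) : W)‖ := rfl
      rw [hns, ← hdecomp] at *
      nlinarith [norm_nonneg (b + (σ : W)),
        norm_nonneg ((σ + Submodule.orthogonalProjectionOnto s b : s) : W),
        sq_nonneg ‖((Submodule.orthogonalProjectionOnto sᗮ b : ↥sᗮ) : W)‖]
    have hle2 : ‖σ + Submodule.orthogonalProjectionOnto s b‖ ≤ ‖(a, b + (σ : W))‖ :=
      hnle.trans (norm_snd_le (a, b + (σ : W)))
    refine (hGx (a, b + (σ : W))).trans ?_
    have hpow : (1 + ‖σ + Submodule.orthogonalProjectionOnto s b‖) ^ k ≤ (1 + ‖(a, b + (σ : W))‖) ^ k :=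
      pow_le_pow_left₀ (by positivity) (by linarith) k
    gcongr
  have hIab : ∀ (a : V) (b : W), Integrable (fun σ : s => G (a, b + (σ : W))) volume := by
    intro a b
    refine (hint.comp_add_right (Submodule.orthogonalProjectionOnto s b)).mono'
      ((G.continuous.comp (continuous_const.prodMk
        (continuous_const.add continuous_subtype_val))).aestronglyMeasurable)
      (Filter.Eventually.of_forall fun σ => hbnd a b σ)
  refine ⟨∫ σ : s, D * ((1 + ‖σ‖) ^ k)⁻¹, integral_nonneg (fun σ => by positivity), hIab,
    fun a b => ?_⟩
  have h1 : (∫ σ : s, ‖G (a, b + (σ : W))‖)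
      ≤ ∫ σ : s, D * ((1 + ‖σ + Submodule.orthogonalProjectionOnto s b‖) ^ k)⁻¹ :=
    integral_mono (hIab a b).norm (hint.comp_add_right (Submodule.orthogonalProjectionOnto s b)) (hbnd a b)
  refine h1.trans (le_of_eq ?_)
  exact integral_add_right_eq_self (fun σ : s => D * ((1 + ‖σ‖) ^ k)⁻¹)
    (Submodule.orthogonalProjectionOnto s b)

theorem stmt8
    {V W : Type*}
    [NormedAddCommGroup V] [InnerProductSpace ℝ V] [FiniteDimensional ℝ V]
    [MeasurableSpace V] [BorelSpace V]
    [NormedAddCommGroup W] [InnerProductSpace ℝ W] [FiniteDimensional ℝ W]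
    [MeasurableSpace W] [BorelSpace W]
    (B : V →ₗ[ℝ] V →ₗ[ℝ] W) (hB : ∀ v : V, B v v = 0)
    (s : Submodule ℝ W) [MeasurableSpace s] [BorelSpace s]
    [MeasurableSpace ↥sᗮ] [BorelSpace ↥sᗮ]
    (F G : SchwartzMap (V × W) ℂ) :
    ∀ p : V × ↥sᗮ,
      radonS s (nilConv B (⇑F) (⇑G)) p =
        nilConv (B.compr₂ ((Submodule.orthogonalProjectionOnto sᗮ : W →L[ℝ] ↥sᗮ) : W →ₗ[ℝ] ↥sᗮ))
          (radonS s (⇑F)) (radonS s (⇑G)) p := by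
  rintro ⟨v, w⟩
  haveI : Measure.IsAddHaarMeasure (volume : Measure (V × W)) :=
    inferInstanceAs (Measure.IsAddHaarMeasure ((volume : Measure V).prod (volume : Measure W)))
  obtain ⟨e, he, hee⟩ := exists_orthAddEquiv s
  obtain ⟨Cg, hCg0, hIg, hIGb⟩ := schwartz_slice_bound s G
  have hcont_c : Continuous fun u : V => (2⁻¹ : ℝ) • (B u v) :=
    ((B.flip v).continuous_of_finiteDimensional).const_smul (2⁻¹ : ℝ)
  -- the measurable equivalence (V × sᗮ) × s ≃ V × W
  let Ψ : ((V × ↥sᗮ) × ↥s) ≃ᵐ (V × W) :=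
    MeasurableEquiv.prodAssoc.trans
      ((MeasurableEquiv.refl V).prodCongr (((MeasurableEquiv.prodComm : ↥sᗮ × ↥s ≃ᵐ ↥s × ↥sᗮ)).trans e))
  have hΨapp : ∀ z : (V × ↥sᗮ) × ↥s, Ψ z = (z.1.1, (z.2 : W) + (z.1.2 : W)) := by
    intro z
    show (z.1.1, e (z.2, z.1.2)) = (z.1.1, (z.2 : W) + (z.1.2 : W))
    rw [hee]
  have hΨmp : MeasurePreserving Ψ volume volume := by
    have h0 : MeasurePreserving ((MeasurableEquiv.prodComm : ↥sᗮ × ↥s ≃ᵐ ↥s × ↥sᗮ)) volume volume :=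
      Measure.measurePreserving_swap
    have h1 : MeasurePreserving
        ((MeasurableEquiv.refl V).prodCongr (((MeasurableEquiv.prodComm : ↥sᗮ × ↥s ≃ᵐ ↥s × ↥sᗮ)).trans e))
        volume volume := (MeasurePreserving.id volume).prod (he.comp h0)
    exact h1.comp volume_preserving_prodAssoc
  -- translation invariance step
  have hTR : ∀ (a : V) (b : W),
      (∫ σ : ↥s, G (a, b + (σ : W))) = radonS s (⇑G) (a, Submodule.orthogonalProjectionOnto sᗮ b) := by
    intro a b
    have key : ∀ σ : ↥s, G (a, b + (σ : W))
        = G (a, ((Submodule.orthogonalProjectionOnto sᗮ b : ↥sᗮ) : W)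
            + ((σ + Submodule.orthogonalProjectionOnto s b : ↥s) : W)) := by
      intro σ
      congr 1
      refine Prod.ext rfl ?_
      show b + (σ : W) = _
      have hb : ((Submodule.orthogonalProjectionOnto s b : s) : W) + ((Submodule.orthogonalProjectionOnto sᗮ b : ↥sᗮ) : W) = b := Submodule.starProjection_add_starProjection_orthogonal (K := s) b
      push_cast
      conv_lhs => rw [← hb]
      abel
    calc (∫ σ : ↥s, G (a, b + (σ : W)))
        = ∫ σ : ↥s, G (a, ((Submodule.orthogonalProjectionOnto sᗮ b : ↥sᗮ) : W)
            + ((σ + Submodule.orthogonalProjectionOnto s b : ↥s) : W)) :=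
          integral_congr_ae (Filter.Eventually.of_forall key)
      _ = ∫ σ : ↥s, G (a, ((Submodule.orthogonalProjectionOnto sᗮ b : ↥sᗮ) : W) + (σ : W)) :=
          integral_add_right_eq_self
            (fun σ : ↥s => G (a, ((Submodule.orthogonalProjectionOnto sᗮ b : ↥sᗮ) : W) + (σ : W)))
            (Submodule.orthogonalProjectionOnto s b)
      _ = radonS s (⇑G) (a, Submodule.orthogonalProjectionOnto sᗮ b) := rfl
  -- integrability for the Fubini swap
  have key1 : Integrable (Function.uncurry fun (σ : ↥s) (y : V × W) =>
      F y * G (v - y.1, ((w : W) - y.2 - (2⁻¹ : ℝ) • B y.1 v) + (σ : W)))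
      ((volume : Measure ↥s).prod (volume : Measure (V × W))) := by
    have hcont : Continuous (Function.uncurry fun (σ : ↥s) (y : V × W) =>
        F y * G (v - y.1, ((w : W) - y.2 - (2⁻¹ : ℝ) • B y.1 v) + (σ : W))) := by
      apply Continuous.mul
      · exact F.continuous.comp continuous_snd
      · exact G.continuous.comp (Continuous.prodMk
          (continuous_const.sub (continuous_fst.comp continuous_snd))
          ((Continuous.sub (continuous_const.sub (continuous_snd.comp continuous_snd))
            (hcont_c.comp (continuous_fst.comp continuous_snd))).add
            (continuous_subtype_val.comp continuous_fst)))
    refine (integrable_prod_iff' hcont.aestronglyMeasurable).2 ⟨?_, ?_⟩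
    · exact Filter.Eventually.of_forall fun y =>
        (hIg (v - y.1) ((w : W) - y.2 - (2⁻¹ : ℝ) • B y.1 v)).const_mul (F y)
    · refine ((F.integrable (μ := volume)).norm.const_mul Cg).mono' ?_ ?_
      · have hcont2 : Continuous fun q : (V × W) × ↥s =>
            ‖F q.1 * G (v - q.1.1, ((w : W) - q.1.2 - (2⁻¹ : ℝ) • B q.1.1 v) + (q.2 : W))‖ := by
          apply Continuous.norm
          apply Continuous.mul
          · exact F.continuous.comp continuous_fst
          · exact G.continuous.comp (Continuous.prodMk
              (continuous_const.sub (continuous_fst.comp continuous_fst))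
              ((Continuous.sub (continuous_const.sub (continuous_snd.comp continuous_fst))
                (hcont_c.comp (continuous_fst.comp continuous_fst))).add
                (continuous_subtype_val.comp continuous_snd)))
        exact hcont2.aestronglyMeasurable.integral_prod_right'
      · refine Filter.Eventually.of_forall fun y => ?_
        rw [Real.norm_of_nonneg (integral_nonneg fun σ => norm_nonneg _)]
        calc (∫ σ : ↥s, ‖F y * G (v - y.1,
                ((w : W) - y.2 - (2⁻¹ : ℝ) • B y.1 v) + (σ : W))‖)
            = ∫ σ : ↥s, ‖F y‖ * ‖G (v - y.1,
                ((w : W) - y.2 - (2⁻¹ : ℝ) • B y.1 v) + (σ : W))‖ := by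
              simp [norm_mul]
          _ = ‖F y‖ * ∫ σ : ↥s, ‖G (v - y.1,
                ((w : W) - y.2 - (2⁻¹ : ℝ) • B y.1 v) + (σ : W))‖ := integral_const_mul _ _
          _ ≤ ‖F y‖ * Cg := mul_le_mul_of_nonneg_left (hIGb _ _) (norm_nonneg _)
          _ = Cg * ‖F y‖ := mul_comm _ _
  -- the function R
  set R : V × ↥sᗮ → ℂ := fun q => radonS s (⇑G) (v - q.1,
    w - q.2 - (2⁻¹ : ℝ) • Submodule.orthogonalProjectionOnto sᗮ (B q.1 v)) with hRdef
  have hproj : ∀ y : V × W, Submodule.orthogonalProjectionOnto sᗮ ((w : W) - y.2 - (2⁻¹ : ℝ) • B y.1 v)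
      = w - Submodule.orthogonalProjectionOnto sᗮ y.2 - (2⁻¹ : ℝ) • Submodule.orthogonalProjectionOnto sᗮ (B y.1 v) := by
    intro y
    simp [map_sub, _root_.map_smul, Submodule.orthogonalProjectionOnto_mem_subspace_eq_self]
  have hπmem : ∀ (τ : ↥s) (ω : ↥sᗮ), Submodule.orthogonalProjectionOnto sᗮ ((τ : W) + (ω : W)) = ω := by
    intro τ ω
    rw [map_add, Submodule.orthogonalProjectionOnto_apply_of_mem_orthogonal
      (Submodule.le_orthogonal_orthogonal s τ.2),
      Submodule.orthogonalProjectionOnto_mem_subspace_eq_self, zero_add]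
  -- integrability of J
  have hR_aesm : AEStronglyMeasurable (fun z : (V × ↥sᗮ) × ↥s => R z.1)
      (volume : Measure ((V × ↥sᗮ) × ↥s)) := by
    have hcont3 : Continuous fun r : ((V × ↥sᗮ) × ↥s) × ↥s =>
        G (v - r.1.1.1, ((w - r.1.1.2 - (2⁻¹ : ℝ) • Submodule.orthogonalProjectionOnto sᗮ (B r.1.1.1 v)
          : ↥sᗮ) : W) + (r.2 : W)) := by
      apply G.continuous.comp
      refine Continuous.prodMk
        (continuous_const.sub (continuous_fst.comp (continuous_fst.comp continuous_fst))) ?_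
      refine Continuous.add (continuous_subtype_val.comp ?_)
        (continuous_subtype_val.comp continuous_snd)
      refine Continuous.sub (continuous_const.sub
        (continuous_snd.comp (continuous_fst.comp continuous_fst))) ?_
      exact ((Submodule.orthogonalProjectionOnto sᗮ).continuous.comp
        ((B.flip v).continuous_of_finiteDimensional.comp
          (continuous_fst.comp (continuous_fst.comp continuous_fst)))).const_smul (2⁻¹ : ℝ)
    exact hcont3.aestronglyMeasurable.integral_prod_right'
  have hRbound : ∀ q : V × ↥sᗮ, ‖R q‖ ≤ Cg := fun q =>
    (norm_integral_le_integral_norm _).trans (hIGb _ _)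
  have hFΨ : Integrable (fun z : (V × ↥sᗮ) × ↥s => F (Ψ z)) volume :=
    (hΨmp.integrable_comp_emb Ψ.measurableEmbedding).2 (F.integrable (μ := volume))
  have hJ : Integrable (fun z : (V × ↥sᗮ) × ↥s => F (Ψ z) * R z.1)
      ((volume : Measure (V × ↥sᗮ)).prod (volume : Measure ↥s)) := by
    have h := hFΨ.bdd_mul hR_aesm (c := Cg) (Filter.Eventually.of_forall fun z => hRbound z.1)
    exact h.congr (Filter.Eventually.of_forall fun z => mul_comm _ _)
  -- main computation
  calc radonS s (nilConv B (⇑F) (⇑G)) (v, w)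
      = ∫ σ : ↥s, ∫ y : V × W,
          F y * G (v - y.1, ((w : W) - y.2 - (2⁻¹ : ℝ) • B y.1 v) + (σ : W)) := by
        refine integral_congr_ae (Filter.Eventually.of_forall fun σ => ?_)
        refine integral_congr_ae (Filter.Eventually.of_forall fun y => ?_)
        dsimp only
        have h : ((w : W) + (σ : W)) - y.2 - (2⁻¹ : ℝ) • B y.1 v
            = ((w : W) - y.2 - (2⁻¹ : ℝ) • B y.1 v) + (σ : W) := by abel
        rw [h]
    _ = ∫ y : V × W, ∫ σ : ↥s,
          F y * G (v - y.1, ((w : W) - y.2 - (2⁻¹ : ℝ) • B y.1 v) + (σ : W)) :=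
        integral_integral_swap key1
    _ = ∫ y : V × W, F y * R (y.1, Submodule.orthogonalProjectionOnto sᗮ y.2) := by
        refine integral_congr_ae (Filter.Eventually.of_forall fun y => ?_)
        dsimp only
        rw [integral_const_mul, hTR (v - y.1) ((w : W) - y.2 - (2⁻¹ : ℝ) • B y.1 v), hRdef]
        dsimp only
        rw [hproj y]
    _ = ∫ z : (V × ↥sᗮ) × ↥s, F (Ψ z) * R ((Ψ z).1, Submodule.orthogonalProjectionOnto sᗮ (Ψ z).2) :=
        (hΨmp.integral_comp Ψ.measurableEmbedding
          (fun y : V × W => F y * R (y.1, Submodule.orthogonalProjectionOnto sᗮ y.2))).symm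
    _ = ∫ z : (V × ↥sᗮ) × ↥s, F (Ψ z) * R z.1 := by
        refine integral_congr_ae (Filter.Eventually.of_forall fun z => ?_)
        dsimp only
        rw [hΨapp z]
        dsimp only
        rw [hπmem z.2 z.1.2, Prod.mk.eta]
    _ = ∫ q : V × ↥sᗮ, ∫ τ : ↥s, F (Ψ (q, τ)) * R (q, τ).1 := integral_prod _ hJ
    _ = ∫ q : V × ↥sᗮ, radonS s (⇑F) q * R q := by
        refine integral_congr_ae (Filter.Eventually.of_forall fun q => ?_)
        dsimp only
        have hττ : ∀ τ : ↥s, F (Ψ (q, τ)) * R (q, τ).1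
            = F (q.1, (q.2 : W) + (τ : W)) * R q := by
          intro τ
          rw [hΨapp (q, τ)]
          dsimp only
          rw [add_comm ((τ : W)) ((q.2 : W))]
        rw [integral_congr_ae (Filter.Eventually.of_forall hττ), integral_mul_const]
        rfl
    _ = nilConv (B.compr₂ ((Submodule.orthogonalProjectionOnto sᗮ : W →L[ℝ] ↥sᗮ) : W →ₗ[ℝ] ↥sᗮ))
          (radonS s (⇑F)) (radonS s (⇑G)) (v, w) := by
        refine integral_congr_ae (Filter.Eventually.of_forall fun q => ?_)
        rw [hRdef]
        dsimp only
        have harg : (2⁻¹ : ℝ) • (B.compr₂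
              ((Submodule.orthogonalProjectionOnto sᗮ : W →L[ℝ] ↥sᗮ) : W →ₗ[ℝ] ↥sᗮ)) q.1 v
            = (2⁻¹ : ℝ) • Submodule.orthogonalProjectionOnto sᗮ (B q.1 v) := by
          rw [LinearMap.compr₂_apply, ContinuousLinearMap.coe_coe]
        rw [harg]
end

section
/- Let d ≥ 1 and let Σ ⊆ ℝ^d be a closed set. Let (c_i)_{i∈ℕ} be complex numbers and suppose that for each i ∈ ℕ and each M ∈ ℕ there is a function h_i^{(M)} ∈ S(ℝ^d) such that: (a) the restriction of h_i^{(M)} to Σ is a function m_i independent of M; (b) for every M ∈ ℕ there exist constants C_M > 0 and A_M ∈ ℕ, independent of i, with ‖h_i^{(M)}‖_{S(ℝ^d),M} ≤ C_M (1+i)^{A_M} for all i; (c) for every N ∈ ℕ there is a constant C'_N with |c_i| ≤ C'_N (1+i)^{-N} for all i. Then the series Σ_{i∈ℕ} c_i m_i(ξ) converges absolutely for every ξ ∈ Σ, and there exists a function f ∈ S(ℝ^d) such that f(ξ) = Σ_{i∈ℕ} c_i m_i(ξ) for every ξ ∈ Σ. -/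
open MeasureTheory

/-- The Schwartz seminorm of order `M`. -/
noncomputable def schwartzSeminormM {E : Type*} [NormedAddCommGroup E] [NormedSpace ℝ E]
    (f : E → ℂ) (M : ℕ) : ℝ :=
  ⨆ p : Fin (M + 1) × E, (1 + ‖p.2‖) ^ M * ‖iteratedFDeriv ℝ (p.1 : ℕ) f p.2‖

section Aux

variable {E : Type*} [NormedAddCommGroup E] [NormedSpace ℝ E]

lemma le_schwartzSeminormM (f : SchwartzMap E ℂ) (M : ℕ) (j : Fin (M + 1)) (x : E) :
    (1 + ‖x‖) ^ M * ‖iteratedFDeriv ℝ (j : ℕ) (⇑f) x‖ ≤ schwartzSeminormM (⇑f) M := by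
  have hbdd : BddAbove (Set.range fun p : Fin (M + 1) × E =>
      (1 + ‖p.2‖) ^ M * ‖iteratedFDeriv ℝ (p.1 : ℕ) (⇑f) p.2‖) := by
    refine ⟨2 ^ M * (Finset.Iic ((M, M) : ℕ × ℕ)).sup
      (fun m => SchwartzMap.seminorm ℝ m.1 m.2) f, ?_⟩
    rintro y ⟨⟨j, x⟩, rfl⟩
    exact SchwartzMap.one_add_le_sup_seminorm_apply (𝕜 := ℝ) (m := ((M, M) : ℕ × ℕ)) le_rfl
      (Nat.lt_succ_iff.mp j.isLt) f x
  exact le_ciSup hbdd (⟨j, x⟩ : Fin (M + 1) × E)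

lemma schwartzSeminormM_nonneg (f : E → ℂ) (M : ℕ) : 0 ≤ schwartzSeminormM f M :=
  Real.iSup_nonneg fun p => by positivity

lemma seminorm_le_schwartzSeminormM (f : SchwartzMap E ℂ) {k n M : ℕ} (hk : k ≤ M)
    (hn : n ≤ M) : SchwartzMap.seminorm ℝ k n f ≤ schwartzSeminormM (⇑f) M := by
  refine SchwartzMap.seminorm_le_bound ℝ k n f (schwartzSeminormM_nonneg _ _) fun x => ?_
  have hx : (0 : ℝ) ≤ ‖x‖ := norm_nonneg x
  have h1 : ‖x‖ ^ k ≤ (1 + ‖x‖) ^ M := by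
    calc ‖x‖ ^ k ≤ (1 + ‖x‖) ^ k := by gcongr; linarith
      _ ≤ (1 + ‖x‖) ^ M := by
          apply pow_le_pow_right₀ (by linarith) hk
  calc ‖x‖ ^ k * ‖iteratedFDeriv ℝ n (⇑f) x‖
      ≤ (1 + ‖x‖) ^ M * ‖iteratedFDeriv ℝ n (⇑f) x‖ :=
        mul_le_mul_of_nonneg_right h1 (norm_nonneg _)
    _ ≤ _ := le_schwartzSeminormM f M ⟨n, Nat.lt_succ_of_le hn⟩ x

lemma seminorm_smul_le' (k n : ℕ) (a : ℂ) (f : SchwartzMap E ℂ) :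
    SchwartzMap.seminorm ℝ k n (a • f) ≤ ‖a‖ * SchwartzMap.seminorm ℝ k n f := by
  refine SchwartzMap.seminorm_le_bound ℝ k n _
    (mul_nonneg (norm_nonneg a) (apply_nonneg _ _)) fun x => ?_
  have hcoe : ⇑(a • f) = a • ⇑f := rfl
  have hdec : ‖x‖ ^ k * ‖iteratedFDeriv ℝ n (a • (f : E → ℂ)) x‖ =
      ‖a‖ * ‖x‖ ^ k * ‖iteratedFDeriv ℝ n f x‖ := by
    rw [mul_comm ‖a‖, mul_assoc, iteratedFDeriv_const_smul_apply (f.smooth _).contDiffAt,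
      norm_smul a (iteratedFDeriv ℝ n (⇑f) x)]
  rw [hcoe, hdec, mul_assoc]
  exact mul_le_mul_of_nonneg_left (SchwartzMap.le_seminorm ℝ k n f x) (norm_nonneg a)

end Aux

theorem stmt15 (d : ℕ) (hd : 1 ≤ d) (Sig : Set (EuclideanSpace ℝ (Fin d)))
    (hSig : IsClosed Sig) (c : ℕ → ℂ)
    (h : ℕ → ℕ → SchwartzMap (EuclideanSpace ℝ (Fin d)) ℂ)
    -- (a) the restriction of h i M to Σ is independent of M
    (ha : ∀ (i M M' : ℕ), ∀ ξ ∈ Sig, h i M ξ = h i M' ξ)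
    -- (b) the M-th Schwartz seminorms of h i M grow polynomially in i
    (hb : ∀ M : ℕ, ∃ C > (0 : ℝ), ∃ A : ℕ, ∀ i : ℕ,
      schwartzSeminormM (⇑(h i M)) M ≤ C * ((1 : ℝ) + i) ^ A)
    -- (c) the coefficients c i decay rapidly
    (hc : ∀ N : ℕ, ∃ C' : ℝ, ∀ i : ℕ, ‖c i‖ ≤ C' * ((1 : ℝ) + i) ^ (-(N : ℤ))) :
    -- absolute convergence on Σ and existence of a Schwartz function whose
    -- restriction to Σ is the sum
    (∀ ξ ∈ Sig, Summable fun i : ℕ => ‖c i * h i 0 ξ‖) ∧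
    ∃ f : SchwartzMap (EuclideanSpace ℝ (Fin d)) ℂ,
      ∀ ξ ∈ Sig, HasSum (fun i : ℕ => c i * h i 0 ξ) (f ξ) := by
  classical
  choose C hC0 A hCA using hb
  choose C' hC' using hc
  -- the slowly growing diagonal index ψ
  set D : ℕ → ℝ := fun M => max 1 (C M * C' (A M + 3)) with hDdef
  set ψ : ℕ → ℕ := fun i => sSup {M | M ≤ i ∧ ∀ m ≤ M, D m ≤ (i : ℝ) + 1} with hψdef
  have hψ : ∀ M₀ i : ℕ, M₀ ≤ i → (∀ m ≤ M₀, D m ≤ (i : ℝ) + 1) →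
      M₀ ≤ ψ i ∧ ∀ m ≤ ψ i, D m ≤ (i : ℝ) + 1 := by
    intro M₀ i h1 h2
    have hbdd : BddAbove {M | M ≤ i ∧ ∀ m ≤ M, D m ≤ (i : ℝ) + 1} :=
      ⟨i, fun M hM => hM.1⟩
    have hmem : M₀ ∈ {M | M ≤ i ∧ ∀ m ≤ M, D m ≤ (i : ℝ) + 1} := ⟨h1, h2⟩
    refine ⟨le_csSup hbdd hmem, ?_⟩
    exact (Nat.sSup_mem ⟨M₀, hmem⟩ hbdd).2
  -- the key seminorm bound
  have key : ∀ M₀ k n i : ℕ, k ≤ M₀ → n ≤ M₀ → M₀ ≤ i → (∀ m ≤ M₀, D m ≤ (i : ℝ) + 1) →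
      SchwartzMap.seminorm ℝ k n (c i • h i (ψ i)) ≤ ((1 : ℝ) + i) ^ (-2 : ℤ) := by
    intro M₀ k n i hk hn h1 h2
    obtain ⟨hψ1, hψ2⟩ := hψ M₀ i h1 h2
    set M := ψ i with hM
    set t : ℝ := 1 + i with ht
    have ht1 : (1 : ℝ) ≤ t := le_add_of_nonneg_right (Nat.cast_nonneg i)
    have ht0 : (0 : ℝ) < t := lt_of_lt_of_le one_pos ht1
    have e1 : SchwartzMap.seminorm ℝ k n (h i M) ≤ C M * t ^ A M :=
      (seminorm_le_schwartzSeminormM (h i M) (hk.trans hψ1) (hn.trans hψ1)).trans (hCA M i)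
    have e2 : ‖c i‖ ≤ C' (A M + 3) * t ^ (-((A M + 3 : ℕ) : ℤ)) := hC' (A M + 3) i
    have e0 : (0 : ℝ) ≤ C' (A M + 3) * t ^ (-((A M + 3 : ℕ) : ℤ)) :=
      (norm_nonneg _).trans e2
    have hexp : ((A M : ℤ)) + (-((A M + 3 : ℕ) : ℤ)) = -3 := by push_cast; ring
    calc SchwartzMap.seminorm ℝ k n (c i • h i M)
        ≤ ‖c i‖ * SchwartzMap.seminorm ℝ k n (h i M) := seminorm_smul_le' k n (c i) (h i M)
      _ ≤ (C' (A M + 3) * t ^ (-((A M + 3 : ℕ) : ℤ))) * (C M * t ^ A M) :=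
          mul_le_mul e2 e1 (apply_nonneg _ _) e0
      _ = (C M * C' (A M + 3)) * (t ^ ((A M : ℤ)) * t ^ (-((A M + 3 : ℕ) : ℤ))) := by
          rw [zpow_natCast]; ring
      _ = (C M * C' (A M + 3)) * t ^ (((A M : ℤ)) + (-((A M + 3 : ℕ) : ℤ))) := by
          rw [zpow_add₀ ht0.ne']
      _ = (C M * C' (A M + 3)) * t ^ (-3 : ℤ) := by rw [hexp]
      _ ≤ D M * t ^ (-3 : ℤ) :=
          mul_le_mul_of_nonneg_right (le_max_right _ _) (zpow_nonneg ht0.le _)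
      _ ≤ t * t ^ (-3 : ℤ) := by
          refine mul_le_mul_of_nonneg_right ?_ (zpow_nonneg ht0.le _)
          have := hψ2 M le_rfl
          rw [ht]; linarith
      _ = t ^ (-2 : ℤ) := by
          rw [show (-2 : ℤ) = 1 + -3 by norm_num, zpow_add₀ ht0.ne', zpow_one]
  -- eventual bound for each pair of seminorm indices
  have evbound : ∀ k n : ℕ, ∀ᶠ i in Filter.atTop,
      SchwartzMap.seminorm ℝ k n (c i • h i (ψ i)) ≤ ((1 : ℝ) + i) ^ (-2 : ℤ) := by
    intro k n
    set M₀ := max k n with hM₀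
    set B := (Finset.range (M₀ + 1)).sup (fun m => ⌈D m⌉₊) with hB
    rw [Filter.eventually_atTop]
    refine ⟨max M₀ B, fun i hi => ?_⟩
    have h1 : M₀ ≤ i := le_trans (le_max_left _ _) hi
    have h2 : ∀ m ≤ M₀, D m ≤ (i : ℝ) + 1 := by
      intro m hm
      have hmB : ⌈D m⌉₊ ≤ B := by
        rw [hB]
        exact Finset.le_sup (f := fun m => ⌈D m⌉₊) (Finset.mem_range.mpr (Nat.lt_succ_of_le hm))
      have hBi : B ≤ i := le_trans (le_max_right _ _) hi
      have : (⌈D m⌉₊ : ℝ) ≤ (i : ℝ) := by exact_mod_cast le_trans hmB hBi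
      have h3 := Nat.le_ceil (D m)
      linarith
    exact key M₀ k n i (le_max_left _ _) (le_max_right _ _) h1 h2
  -- summability of the comparison series
  have hsum2 : Summable (fun i : ℕ => ((1 : ℝ) + i) ^ (-2 : ℤ)) := by
    have h0 : Summable (fun n : ℕ => 1 / ((n : ℝ)) ^ 2) :=
      Real.summable_one_div_nat_pow.mpr one_lt_two
    have h1 := (summable_nat_add_iff 1).mpr h0
    refine h1.congr fun i => ?_
    show 1 / ((i + 1 : ℕ) : ℝ) ^ 2 = ((1 : ℝ) + i) ^ (-2 : ℤ)
    symm
    push_cast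
    rw [add_comm, zpow_neg, one_div]
    norm_num
  -- summability of all seminorms of the terms
  have hv : ∀ k n : ℕ, Summable (fun i => SchwartzMap.seminorm ℝ k n (c i • h i (ψ i))) := by
    intro k n
    apply Summable.of_norm_bounded_eventually_nat hsum2
    filter_upwards [evbound k n] with i hi
    rwa [Real.norm_of_nonneg (apply_nonneg _ _)]
  set g : ℕ → SchwartzMap (EuclideanSpace ℝ (Fin d)) ℂ := fun i => c i • h i (ψ i) with hgdef
  have hsmooth : ∀ i, ContDiff ℝ ((⊤ : ℕ∞) : WithTop ℕ∞) (⇑(g i)) := fun i => (g i).smooth'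
  have hbound : ∀ (q i : ℕ) (x : EuclideanSpace ℝ (Fin d)),
      ‖iteratedFDeriv ℝ q (⇑(g i)) x‖ ≤ SchwartzMap.seminorm ℝ 0 q (g i) := fun q i x =>
    SchwartzMap.norm_iteratedFDeriv_le_seminorm ℝ _ _ _
  have hvsum : ∀ q : ℕ, ((q : ℕ∞) : ℕ∞) ≤ (⊤ : ℕ∞) →
      Summable (fun i => SchwartzMap.seminorm ℝ 0 q (g i)) := fun q _ => hv 0 q
  have hsmoothsum : ContDiff ℝ ((⊤ : ℕ∞) : WithTop ℕ∞) (fun x => ∑' i, g i x) :=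
    contDiff_tsum hsmooth (fun q hq => hv 0 q) (fun q i x _ => hbound q i x)
  have hderiv : ∀ (q : ℕ) (x : EuclideanSpace ℝ (Fin d)),
      iteratedFDeriv ℝ q (fun y => ∑' i, g i y) x = ∑' i, iteratedFDeriv ℝ q (⇑(g i)) x :=
    fun q x => iteratedFDeriv_tsum_apply hsmooth (fun q _ => hv 0 q)
      (fun q i x _ => hbound q i x) le_top x
  have hdecay : ∀ k q : ℕ, ∃ Cb : ℝ, ∀ x : EuclideanSpace ℝ (Fin d),
      ‖x‖ ^ k * ‖iteratedFDeriv ℝ q (fun y => ∑' i, g i y) x‖ ≤ Cb := by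
    intro k q
    refine ⟨∑' i, SchwartzMap.seminorm ℝ k q (g i), fun x => ?_⟩
    rw [hderiv q x]
    have hsn : Summable fun i => ‖iteratedFDeriv ℝ q (⇑(g i)) x‖ :=
      Summable.of_nonneg_of_le (fun i => norm_nonneg _) (fun i => hbound q i x) (hv 0 q)
    calc ‖x‖ ^ k * ‖∑' i, iteratedFDeriv ℝ q (⇑(g i)) x‖
        ≤ ‖x‖ ^ k * ∑' i, ‖iteratedFDeriv ℝ q (⇑(g i)) x‖ :=
          mul_le_mul_of_nonneg_left (norm_tsum_le_tsum_norm hsn) (by positivity)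
      _ = ∑' i, ‖x‖ ^ k * ‖iteratedFDeriv ℝ q (⇑(g i)) x‖ := tsum_mul_left.symm
      _ ≤ ∑' i, SchwartzMap.seminorm ℝ k q (g i) :=
          Summable.tsum_le_tsum (fun i => SchwartzMap.le_seminorm ℝ k q (g i) x)
            (hsn.mul_left _) (hv k q)
  set F : SchwartzMap (EuclideanSpace ℝ (Fin d)) ℂ :=
    ⟨fun x => ∑' i, g i x, hsmoothsum, hdecay⟩ with hFdef
  have hFapp : ∀ x, F x = ∑' i, g i x := fun x => rfl
  have hsummable_pt : ∀ ξ : EuclideanSpace ℝ (Fin d), Summable (fun i => g i ξ) := by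
    intro ξ
    apply Summable.of_norm
    exact Summable.of_nonneg_of_le (fun i => norm_nonneg _)
      (fun i => SchwartzMap.norm_le_seminorm ℝ (g i) ξ) (hv 0 0)
  have hptnorm : ∀ ξ ∈ Sig, ∀ i : ℕ, g i ξ = c i * h i 0 ξ := by
    intro ξ hξ i
    rw [hgdef]
    simp only [SchwartzMap.smul_apply, smul_eq_mul]
    rw [ha i (ψ i) 0 ξ hξ]
  constructor
  · intro ξ hξ
    have h1 : Summable fun i => ‖g i ξ‖ :=
      Summable.of_nonneg_of_le (fun i => norm_nonneg _)
        (fun i => SchwartzMap.norm_le_seminorm ℝ (g i) ξ) (hv 0 0)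
    exact h1.congr fun i => by rw [hptnorm ξ hξ i]
  · refine ⟨F, fun ξ hξ => ?_⟩
    have heq : (fun i => c i * h i 0 ξ) = fun i => g i ξ :=
      funext fun i => (hptnorm ξ hξ i).symm
    rw [heq, hFapp ξ]
    exact (hsummable_pt ξ).hasSum
end
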